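/- (Theorem 1, identification by adjusting for a deconfounder of the internal representation.) Let R : Ω → ℛ be a random variable with countable value space ℛ (the internal representation), and let f_T : ℛ → {0,1} and f_U : ℛ → 𝒰 be functions with T = f_T ∘ R and U = f_U ∘ R (deterministic decoding). Let f : ℛ → 𝒬 be a deconfounder that determines the confounding features, i.e. f_U = g ∘ f for some function g : 𝒬 → 𝒰. For each (t,u) ∈ {0,1} × 𝒰 let Y_{t,u} : Ω → 𝒴 (𝒴 countable) be a potential outcome independent of R, and let Y = Y_{T,U} (consistency). Assume positivity for the deconfounder: P(T = t, f(R) = q) > 0 for every t ∈ {0,1} and every q with P(f(R) = q) > 0. Then for every t ∈ {0,1} and y ∈ 𝒴: P(Y_{t,U} = y) = Σ_{r : P(R = r) > 0} P(Y = y ∣ T = t, f(R) = f(r)) · P(R = r), where Y_{t,U} denotes the random variable ω ↦ Y_{t,U(ω)}(ω). -/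

import Mathlib

open MeasureTheory

/-- Conditional probability `P(A ∣ B) = P(A ∩ B) / P(B)`. -/
noncomputable def cprob {Ω : Type*} [MeasurableSpace Ω] (μ : Measure Ω) (A B : Set Ω) :
    ENNReal :=
  μ (A ∩ B) / μ B

/-- Theorem 1 (identification by adjusting for a deconfounder of the internal
representation): with deterministic decoding `T = f_T ∘ R`, `U = f_U ∘ R`, a
deconfounder `f` determining the confounding features (`f_U = g ∘ f`), potential
outcomes independent of `R`, consistency, and positivity for the deconfounder,
`P(Y_{t,U} = y) = Σ_{r : P(R = r) > 0} P(Y = y ∣ T = t, f(R) = f(r)) · P(R = r)`. -/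
theorem identification_by_deconfounder
    {Ω ℛ 𝒰 𝒬 𝒴 : Type*} [MeasurableSpace Ω] (μ : Measure Ω) [IsProbabilityMeasure μ]
    [Countable ℛ] [Countable 𝒰] [Countable 𝒬] [Countable 𝒴]
    (R : Ω → ℛ) (fT : ℛ → Bool) (fU : ℛ → 𝒰) (f : ℛ → 𝒬) (g : 𝒬 → 𝒰)
    (T : Ω → Bool) (U : Ω → 𝒰)
    (Ypo : Bool → 𝒰 → Ω → 𝒴) (Y : Ω → 𝒴)
    (hTdef : ∀ ω, T ω = fT (R ω)) (hUdef : ∀ ω, U ω = fU (R ω))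
    (hdecon : ∀ r : ℛ, fU r = g (f r))
    (hYdef : ∀ ω, Y ω = Ypo (T ω) (U ω) ω)
    (hR : ∀ r : ℛ, MeasurableSet {ω | R ω = r})
    (hYpo : ∀ (t : Bool) (u : 𝒰) (y : 𝒴), MeasurableSet {ω | Ypo t u ω = y})
    (hindep : ∀ (t : Bool) (u : 𝒰) (y : 𝒴) (r : ℛ),
      μ ({ω | Ypo t u ω = y} ∩ {ω | R ω = r})
        = μ {ω | Ypo t u ω = y} * μ {ω | R ω = r})
    (hpos : ∀ (t : Bool) (q : 𝒬), 0 < μ {ω | f (R ω) = q} →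
      0 < μ ({ω | T ω = t} ∩ {ω | f (R ω) = q})) :
    ∀ (t : Bool) (y : 𝒴),
      μ {ω | Ypo t (U ω) ω = y}
        = ∑' r : {r : ℛ // 0 < μ {ω | R ω = r}},
            cprob μ {ω | Y ω = y} ({ω | T ω = t} ∩ {ω | f (R ω) = f r.1})
              * μ {ω | R ω = r.1} := by
  intro t y
  -- independence extends to events {ω | R ω ∈ S}
  have key : ∀ (u : 𝒰) (S : Set ℛ),
      μ ({ω | Ypo t u ω = y} ∩ {ω | R ω ∈ S})
        = μ {ω | Ypo t u ω = y} * μ {ω | R ω ∈ S} := by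
    intro u S
    have hU : {ω | R ω ∈ S} = ⋃ r : S, {ω | R ω = (r : ℛ)} := by
      ext ω; simp
    have hdisj : Pairwise (Function.onFun Disjoint (fun r : S => {ω | R ω = (r : ℛ)})) := by
      intro r r' hne
      refine Set.disjoint_left.2 fun ω h h' => hne (Subtype.ext ?_)
      rw [← h, ← h']
    have hdisj2 : Pairwise (Function.onFun Disjoint
        (fun r : S => {ω | Ypo t u ω = y} ∩ {ω | R ω = (r : ℛ)})) := by
      intro r r' hne
      exact (hdisj hne).mono Set.inter_subset_right Set.inter_subset_right
    rw [hU, Set.inter_iUnion, measure_iUnion hdisj2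
        (fun r => (hYpo t u y).inter (hR r)), measure_iUnion hdisj (fun r => hR r),
      ← ENNReal.tsum_mul_left]
    exact tsum_congr fun r => hindep t u y r
  -- decompose the LHS over values of R
  have hLHS : μ {ω | Ypo t (U ω) ω = y}
      = ∑' r : ℛ, μ {ω | Ypo t (fU r) ω = y} * μ {ω | R ω = r} := by
    have hset : {ω | Ypo t (U ω) ω = y}
        = ⋃ r : ℛ, ({ω | Ypo t (fU r) ω = y} ∩ {ω | R ω = r}) := by
      ext ω
      simp only [Set.mem_setOf_eq, Set.mem_iUnion, Set.mem_inter_iff]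
      constructor
      · intro h; exact ⟨R ω, by rw [← hUdef]; exact h, rfl⟩
      · rintro ⟨r, h, hr⟩; rw [hUdef, hr]; exact h
    have hdisj : Pairwise (Function.onFun Disjoint
        (fun r : ℛ => {ω | Ypo t (fU r) ω = y} ∩ {ω | R ω = r})) := by
      intro r r' hne
      refine Set.disjoint_left.2 fun ω h h' => hne ?_
      rw [← h.2, ← h'.2]
    rw [hset, measure_iUnion hdisj (fun r => (hYpo t (fU r) y).inter (hR r))]
    exact tsum_congr fun r => hindep t (fU r) y r
  -- compute the conditional probability for each r with positive mass
  have hterm : ∀ r : {r : ℛ // 0 < μ {ω | R ω = r}},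
      cprob μ {ω | Y ω = y} ({ω | T ω = t} ∩ {ω | f (R ω) = f r.1})
          * μ {ω | R ω = r.1}
        = μ {ω | Ypo t (fU r.1) ω = y} * μ {ω | R ω = r.1} := by
    rintro ⟨r, hr⟩
    set q := f r with hq
    set B := {ω | T ω = t} ∩ {ω | f (R ω) = q} with hB
    have hBS : B = {ω | R ω ∈ {r' : ℛ | fT r' = t ∧ f r' = q}} := by
      ext ω
      simp only [hB, Set.mem_inter_iff, Set.mem_setOf_eq, hTdef]
    have hBpos : 0 < μ B := by
      refine hpos t q ?_
      refine lt_of_lt_of_le hr (measure_mono fun ω h => ?_)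
      simp only [Set.mem_setOf_eq] at h ⊢
      rw [h]
    have hYB : {ω | Y ω = y} ∩ B = {ω | Ypo t (g q) ω = y} ∩ B := by
      ext ω
      simp only [Set.mem_inter_iff, Set.mem_setOf_eq, hB]
      constructor
      · rintro ⟨hY, hT, hf⟩
        refine ⟨?_, hT, hf⟩
        rw [← hY, hYdef, hT, hUdef, hdecon, hf]
      · rintro ⟨hY, hT, hf⟩
        refine ⟨?_, hT, hf⟩
        rw [hYdef, hT, hUdef, hdecon, hf, hY]
    have hcp : cprob μ {ω | Y ω = y} B = μ {ω | Ypo t (g q) ω = y} := by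
      rw [cprob, hYB, hBS, key (g q) _, ← hBS]
      rw [mul_div_assoc, ENNReal.div_self hBpos.ne' (measure_ne_top μ B), mul_one]
    rw [hcp, hdecon, hq]
  calc μ {ω | Ypo t (U ω) ω = y}
      = ∑' r : ℛ, μ {ω | Ypo t (fU r) ω = y} * μ {ω | R ω = r} := hLHS
    _ = ∑' r : {r : ℛ // 0 < μ {ω | R ω = r}},
          μ {ω | Ypo t (fU r.1) ω = y} * μ {ω | R ω = r.1} := by
        refine (tsum_subtype_eq_of_support_subset fun r hr => ?_).symm
        simp only [Function.mem_support, ne_eq] at hr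
        show 0 < μ {ω | R ω = r}
        refine pos_iff_ne_zero.mpr ?_
        intro h0
        exact hr (by rw [h0, mul_zero])
    _ = ∑' r : {r : ℛ // 0 < μ {ω | R ω = r}},
          cprob μ {ω | Y ω = y} ({ω | T ω = t} ∩ {ω | f (R ω) = f r.1})
            * μ {ω | R ω = r.1} := (tsum_congr fun r => (hterm r).symm)
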